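/- (Entrywise condensation recurrence for consecutive minors) Let R be a commutative ring and let A : ℕ × ℕ → R be a doubly indexed family of elements of R. For k ≥ 0 and i, j ∈ ℕ, let M_k(i,j) denote the determinant of the (k+1)×(k+1) consecutive minor of A with entries A(i+s, j+t) for 0 ≤ s,t ≤ k. Then for all k ≥ 1 and all i, j: M_{k+1}(i,j) · M_{k−1}(i+1, j+1) = M_k(i,j) · M_k(i+1, j+1) − M_k(i, j+1) · M_k(i+1, j). -/

import Mathlib

open Matrix

private lemma detE : ∀ (m : ℕ) {R : Type*} [CommRing R] (u v : Fin (m + 2) → R),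
    (Matrix.of fun s t : Fin (m + 2) =>
        if (t : ℕ) = 0 then u s else if (t : ℕ) = m + 1 then v s
        else if (s : ℕ) = (t : ℕ) then (1 : R) else 0).det
      = u 0 * v (Fin.last (m + 1)) - u (Fin.last (m + 1)) * v 0 := by
  intro m
  induction m with
  | zero =>
    intro R _ u v
    rw [Matrix.det_fin_two]
    simp [Fin.last]
    ring
  | succ m ih =>
    intro R _ u v
    rw [Matrix.det_succ_column _ 1]
    rw [Finset.sum_eq_single 1]
    · have h1 : ((1 : Fin (m + 3)) : ℕ) = 1 := rfl
      have hsub : (Matrix.of fun s t : Fin (m + 3) =>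
          if (t : ℕ) = 0 then u s else if (t : ℕ) = m + 2 then v s
          else if (s : ℕ) = (t : ℕ) then (1 : R) else 0).submatrix
            (Fin.succAbove 1) (Fin.succAbove 1)
          = Matrix.of fun s t : Fin (m + 2) =>
            if (t : ℕ) = 0 then (u ∘ Fin.succAbove 1) s
            else if (t : ℕ) = m + 1 then (v ∘ Fin.succAbove 1) s
            else if (s : ℕ) = (t : ℕ) then (1 : R) else 0 := by
        ext s t
        have hs : ((Fin.succAbove 1 s : Fin (m+3)) : ℕ)
            = if (s : ℕ) = 0 then (s : ℕ) else (s : ℕ) + 1 := by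
          simp only [Fin.succAbove, Fin.lt_def]
          have : ((s.castSucc : Fin (m+3)) : ℕ) = (s : ℕ) := rfl
          rw [this, h1]
          split_ifs <;> simp <;> omega
        have ht : ((Fin.succAbove 1 t : Fin (m+3)) : ℕ)
            = if (t : ℕ) = 0 then (t : ℕ) else (t : ℕ) + 1 := by
          simp only [Fin.succAbove, Fin.lt_def]
          have : ((t.castSucc : Fin (m+3)) : ℕ) = (t : ℕ) := rfl
          rw [this, h1]
          split_ifs <;> simp <;> omega
        have hsb := s.isLt
        have htb := t.isLt
        simp only [Matrix.submatrix_apply, Matrix.of_apply, Function.comp_apply]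
        split_ifs at hs ht <;>
          simp only [hs, ht] <;> split_ifs <;> first | rfl | omega | exact False.elim (by assumption)
      rw [hsub, ih]
      have e0 : (Fin.succAbove 1 (0 : Fin (m+2)) : Fin (m+3)) = 0 := by
        ext
        simp [Fin.succAbove, Fin.lt_def]
      have el : (Fin.succAbove 1 (Fin.last (m+1)) : Fin (m+3)) = Fin.last (m+2) := by
        ext
        simp [Fin.succAbove, Fin.lt_def, Fin.last]
      simp only [Matrix.of_apply, h1, Function.comp_apply, e0, el]
      norm_num
    · intro b _ hb
      have hb' : ¬ ((b : ℕ) = 1) := by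
        intro h; apply hb; ext; simpa using h
      have h1 : ((1 : Fin (m + 3)) : ℕ) = 1 := rfl
      simp only [Matrix.of_apply, h1]
      norm_num [hb']
    · simp

private lemma key_mul {R : Type*} [CommRing R] (N : ℕ)
    (A : Matrix (Fin (N + 2)) (Fin (N + 2)) R) :
    A.det * (adjugate A 0 0 * adjugate A (Fin.last (N + 1)) (Fin.last (N + 1))
        - adjugate A (Fin.last (N + 1)) 0 * adjugate A 0 (Fin.last (N + 1)))
      = A.det * (A.det *
        (A.submatrix (fun s : Fin N => s.castSucc.succ) (fun t : Fin N => t.castSucc.succ)).det) := by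
  set B : Matrix (Fin (N + 2)) (Fin (N + 2)) R := Matrix.of fun s t : Fin (N + 2) =>
    if (t : ℕ) = 0 then (fun s => adjugate A s 0) s
    else if (t : ℕ) = N + 1 then (fun s => adjugate A s (Fin.last (N + 1))) s
    else if (s : ℕ) = (t : ℕ) then (1 : R) else 0 with hBdef
  have hB : B.det = adjugate A 0 0 * adjugate A (Fin.last (N + 1)) (Fin.last (N + 1))
      - adjugate A (Fin.last (N + 1)) 0 * adjugate A 0 (Fin.last (N + 1)) := by
    rw [hBdef, detE N (fun s => adjugate A s 0) (fun s => adjugate A s (Fin.last (N + 1)))]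
  set C : Matrix (Fin (N + 2)) (Fin (N + 2)) R := Matrix.of fun s t : Fin (N + 2) =>
    if (t : ℕ) = 0 then (if (s : ℕ) = 0 then A.det else 0)
    else if (t : ℕ) = N + 1 then (if (s : ℕ) = N + 1 then A.det else 0)
    else A s t with hCdef
  have hAB : A * B = C := by
    ext s t
    rw [Matrix.mul_apply]
    by_cases ht0 : (t : ℕ) = 0
    · have : t = 0 := by ext; simpa using ht0
      subst this
      have : ∀ x, A s x * B x 0 = A s x * adjugate A x 0 := by
        intro x; rw [hBdef]; simp
      simp_rw [this]
      have h2 : ∑ x, A s x * adjugate A x 0 = (A * adjugate A) s 0 := by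
        rw [Matrix.mul_apply]
      rw [h2, Matrix.mul_adjugate]
      by_cases hs : (s : ℕ) = 0 <;> simp only [hCdef, Matrix.of_apply, Matrix.one_apply] <;> simp [Matrix.one_apply, ← Fin.val_inj, hs]
    · by_cases htl : (t : ℕ) = N + 1
      · have : t = Fin.last (N + 1) := by ext; simpa using htl
        subst this
        have : ∀ x, A s x * B x (Fin.last (N + 1)) = A s x * adjugate A x (Fin.last (N + 1)) := by
          intro x; rw [hBdef]; simp
        simp_rw [this]
        have h2 : ∑ x, A s x * adjugate A x (Fin.last (N + 1))
            = (A * adjugate A) s (Fin.last (N + 1)) := by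
          rw [Matrix.mul_apply]
        rw [h2, Matrix.mul_adjugate]
        by_cases hs : (s : ℕ) = N + 1 <;> simp only [hCdef, Matrix.of_apply, Matrix.one_apply] <;> simp [Matrix.one_apply, ← Fin.val_inj, hs]
      · have : ∀ x, A s x * B x t = A s x * (if x = t then 1 else 0) := by
          intro x; rw [hBdef]; simp only [Matrix.of_apply, ht0, htl, if_false]; simp [← Fin.val_inj]
        simp_rw [this, mul_ite, mul_one, mul_zero]
        rw [Finset.sum_ite_eq' Finset.univ t (fun x => A s x)]
        simp [hCdef, ht0, htl, show t ≠ 0 from fun h => ht0 (by simp [h])]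
  have hCdet : C.det = A.det * (A.det *
      (A.submatrix (fun s : Fin N => s.castSucc.succ) (fun t : Fin N => t.castSucc.succ)).det) := by
    rw [Matrix.det_succ_column_zero]
    rw [Finset.sum_eq_single 0]
    · have hC00 : C 0 0 = A.det := by rw [hCdef]; simp
      rw [hC00, Fin.succAbove_zero]
      simp only [Fin.val_zero, pow_zero, one_mul]
      congr 1
      -- det (C.submatrix Fin.succ Fin.succ) = A.det * inner
      rw [Matrix.det_succ_column (C.submatrix Fin.succ Fin.succ) (Fin.last N)]
      rw [Finset.sum_eq_single (Fin.last N)]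
      · have hval : C (Fin.last N).succ (Fin.last N).succ = A.det := by
          rw [hCdef]
          simp only [Matrix.of_apply, Fin.val_succ, Fin.val_last]; simp
        rw [Matrix.submatrix_apply, hval, Fin.succAbove_last]
        have hsgn : ((-1 : R)) ^ ((Fin.last N : ℕ) + (Fin.last N : ℕ)) = 1 :=
          Even.neg_one_pow ⟨(Fin.last N : ℕ), rfl⟩
        rw [hsgn, one_mul]
        congr 1
        congr 1
        ext a b
        rw [Matrix.submatrix_apply, Matrix.submatrix_apply, Matrix.submatrix_apply, hCdef]
        have hb := b.isLt
        simp only [Matrix.of_apply, Fin.val_succ, Fin.coe_castSucc]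
        rw [if_neg (by omega), if_neg (by omega)]
      · intro b _ hb
        have hb' : ¬ ((b : ℕ) = N) := by
          intro h; apply hb; ext; simpa using h
        have : C b.succ (Fin.last N).succ = 0 := by
          rw [hCdef]
          simp only [Matrix.of_apply, Fin.val_succ, Fin.val_last]
          split_ifs <;> first | rfl | omega | exact False.elim (by assumption)
        rw [Matrix.submatrix_apply, this, mul_zero, zero_mul]
      · simp
    · intro b _ hb
      have hb' : ¬ ((b : ℕ) = 0) := by
        intro h; apply hb; ext; simpa using h
      have : C b 0 = 0 := by
        rw [hCdef]; simp [hb', hb]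
      rw [this, mul_zero, zero_mul]
    · simp
  rw [← hB, ← Matrix.det_mul, hAB, hCdet]

/-- Determinant of the `(k+1) × (k+1)` consecutive minor of `A` with upper-left
corner at `(i, j)`. -/
def consecMinorDet {R : Type*} [CommRing R] (A : ℕ × ℕ → R) (k i j : ℕ) : R :=
  (Matrix.of fun s t : Fin (k + 1) => A (i + s, j + t)).det

private lemma det_submatrix_eq {R : Type*} [CommRing R] (g : ℕ × ℕ → R) (i j n N a b : ℕ)
    (f h : Fin (n + 1) → Fin (N + 1))
    (hf : ∀ s, (f s : ℕ) = (s : ℕ) + a) (hh : ∀ t, (h t : ℕ) = (t : ℕ) + b) :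
    ((Matrix.of fun s t : Fin (N + 1) => g (i + s, j + t)).submatrix f h).det
      = consecMinorDet g n (i + a) (j + b) := by
  unfold consecMinorDet
  congr 1
  ext s t
  simp only [Matrix.submatrix_apply, Matrix.of_apply, hf, hh]
  congr 1
  simp only [Prod.mk.injEq]
  constructor <;> omega

private noncomputable def genVar : ℕ × ℕ → MvPolynomial (ℕ × ℕ) ℤ := fun p => MvPolynomial.X p

private lemma generic_identity (m i j : ℕ) :
    consecMinorDet genVar (m + 1) i j * consecMinorDet genVar (m + 1) (i + 1) (j + 1)
      - consecMinorDet genVar (m + 1) i (j + 1) * consecMinorDet genVar (m + 1) (i + 1) j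
    = consecMinorDet genVar (m + 2) i j * consecMinorDet genVar m (i + 1) (j + 1) := by
  set S := MvPolynomial (ℕ × ℕ) ℤ
  set A : Matrix (Fin (m + 3)) (Fin (m + 3)) S :=
    Matrix.of fun s t : Fin (m + 3) => genVar (i + s, j + t) with hAdef
  have hAdet : A.det = consecMinorDet genVar (m + 2) i j := rfl
  have h := key_mul (m + 1) A
  -- translate the adjugate entries
  have hv0 : ∀ s : Fin (m + 2), ((Fin.succAbove (0 : Fin (m + 3)) s : Fin (m + 3)) : ℕ)
      = (s : ℕ) + 1 := by
    intro s; rw [Fin.succAbove_zero]; simp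
  have hvl : ∀ s : Fin (m + 2), ((Fin.succAbove (Fin.last (m + 2)) s : Fin (m + 3)) : ℕ)
      = (s : ℕ) + 0 := by
    intro s; rw [Fin.succAbove_last]; simp
  have t1 : adjugate A 0 0 = consecMinorDet genVar (m + 1) (i + 1) (j + 1) := by
    rw [Matrix.adjugate_fin_succ_eq_det_submatrix]
    rw [det_submatrix_eq genVar i j (m + 1) (m + 2) 1 1 _ _ hv0 hv0]
    simp
  have t2 : adjugate A (Fin.last (m + 2)) (Fin.last (m + 2))
      = consecMinorDet genVar (m + 1) i j := by
    rw [Matrix.adjugate_fin_succ_eq_det_submatrix]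
    rw [det_submatrix_eq genVar i j (m + 1) (m + 2) 0 0 _ _ hvl hvl]
    have : ((-1 : S)) ^ ((Fin.last (m + 2) : ℕ) + (Fin.last (m + 2) : ℕ)) = 1 :=
      Even.neg_one_pow ⟨(Fin.last (m + 2) : ℕ), rfl⟩
    rw [this, one_mul]
    norm_num
  have t3 : adjugate A (Fin.last (m + 2)) 0
      = (-1 : S) ^ (m + 2) * consecMinorDet genVar (m + 1) (i + 1) j := by
    rw [Matrix.adjugate_fin_succ_eq_det_submatrix]
    rw [det_submatrix_eq genVar i j (m + 1) (m + 2) 1 0 _ _ hv0 hvl]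
    simp
  have t4 : adjugate A 0 (Fin.last (m + 2))
      = (-1 : S) ^ (m + 2) * consecMinorDet genVar (m + 1) i (j + 1) := by
    rw [Matrix.adjugate_fin_succ_eq_det_submatrix]
    rw [det_submatrix_eq genVar i j (m + 1) (m + 2) 0 1 _ _ hvl hv0]
    simp
  have t5 : (A.submatrix (fun s : Fin (m + 1) => s.castSucc.succ)
      (fun t : Fin (m + 1) => t.castSucc.succ)).det
      = consecMinorDet genVar m (i + 1) (j + 1) := by
    rw [det_submatrix_eq genVar i j m (m + 2) 1 1 _ _ (fun s => by simp) (fun t => by simp)]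
  rw [t1, t2, t3, t4, t5, hAdet] at h
  have hs2 : ((-1 : S) ^ (m + 2)) * ((-1 : S) ^ (m + 2)) = 1 := by
    rw [← pow_add]; exact Even.neg_one_pow ⟨m + 2, rfl⟩
  have hne : consecMinorDet genVar (m + 2) i j ≠ 0 := by
    intro h0
    set φ : ℕ × ℕ → ℤ := fun p => if p.1 + j = p.2 + i then (1 : ℤ) else 0 with hφ
    have h1 : (MvPolynomial.aeval φ : S →ₐ[ℤ] ℤ).toRingHom (consecMinorDet genVar (m + 2) i j)
        = 1 := by
      show (MvPolynomial.aeval φ : S →ₐ[ℤ] ℤ).toRingHom A.det = 1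
      rw [RingHom.map_det]
      have : A.map (MvPolynomial.aeval φ : S →ₐ[ℤ] ℤ).toRingHom = 1 := by
        ext s t
        simp only [Matrix.map_apply, hAdef, Matrix.of_apply, genVar, AlgHom.toRingHom_eq_coe,
          RingHom.coe_coe, MvPolynomial.aeval_X, hφ, Matrix.one_apply, ← Fin.val_eq_val]
        split_ifs <;> omega
      rw [RingHom.mapMatrix_apply, this, Matrix.det_one]
    rw [h0] at h1
    simp at h1
  refine mul_left_cancel₀ hne ?_
  linear_combination h + consecMinorDet genVar (m + 2) i j
    * (consecMinorDet genVar (m + 1) (i + 1) j * consecMinorDet genVar (m + 1) i (j + 1)) * hs2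

private lemma consecMinorDet_map {R S : Type*} [CommRing R] [CommRing S] (f : R →+* S)
    (g : ℕ × ℕ → R) (k i j : ℕ) :
    f (consecMinorDet g k i j) = consecMinorDet (fun p => f (g p)) k i j := by
  unfold consecMinorDet
  rw [RingHom.map_det]
  congr 1

/-- Entrywise condensation recurrence for consecutive minors. -/
theorem consecMinor_condensation {R : Type*} [CommRing R] (A : ℕ × ℕ → R) :
    ∀ k, 1 ≤ k → ∀ i j,
      consecMinorDet A (k + 1) i j * consecMinorDet A (k - 1) (i + 1) (j + 1) =
        consecMinorDet A k i j * consecMinorDet A k (i + 1) (j + 1) -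
        consecMinorDet A k i (j + 1) * consecMinorDet A k (i + 1) j := by
  intro k hk i j
  obtain ⟨m, rfl⟩ : ∃ m, k = m + 1 := ⟨k - 1, by omega⟩
  set f : MvPolynomial (ℕ × ℕ) ℤ →+* R := (MvPolynomial.aeval A : _ →ₐ[ℤ] R).toRingHom with hf
  have hg : (fun p => f (genVar p)) = A := by
    funext p
    simp [hf, genVar]
  have hgen := congrArg f (generic_identity m i j)
  simp only [_root_.map_sub, _root_.map_mul, consecMinorDet_map, hg] at hgen
  exact hgen.symm
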